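/- For every x ∈ E and every integer n ≥ 3, the class 𝓕_{n−1}(x) is contained in 𝓕_n(x); moreover the inclusion is strict: for x̄ = (0,0) ∈ ℝ², the function f(x₁,x₂) = |x₁|ⁿ + |x₂|ⁿ belongs to 𝓕_n(x̄) but not to 𝓕_{n−1}(x̄). -/

import Mathlib

open Filter Topology

/-- The space of continuous `m`-linear forms `L^m(E)`. -/
abbrev MForm (E : Type*) [NormedAddCommGroup E] [InnerProductSpace ℝ E] (m : ℕ) : Type _ :=
  ContinuousMultilinearMap ℝ (fun _ : Fin m => E) ℝ

/-- A tuple of multilinear forms `(x₁*, …, x_k*)`, where `x_i*` is an `i`-linear form. -/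
abbrev FormTuple (E : Type*) [NormedAddCommGroup E] [InnerProductSpace ℝ E] (k : ℕ) : Type _ :=
  ∀ i : Fin k, MForm E (i.1 + 1)

/-- Restriction of a tuple of forms to its first `m` entries. -/
def FormTuple.restrict {E : Type*} [NormedAddCommGroup E] [InnerProductSpace ℝ E] {k : ℕ}
    (xs : FormTuple E k) (m : ℕ) (h : m ≤ k) : FormTuple E m :=
  fun j => xs ⟨j.1, lt_of_lt_of_le j.2 h⟩

/-- The lower Hadamard directional derivative of order `k + 1` of `f` at `x`
with parameters `xs = (x₁*, …, x_k*)` in direction `u`: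
`liminf_{t↓0, u'→u} (k+1)!/t^(k+1) * (f (x + t u') - f x - ∑_{i=1}^{k} t^i/i! · x_i*(u',…,u'))`. -/
noncomputable def hadamardDeriv {E : Type*} [NormedAddCommGroup E] [InnerProductSpace ℝ E]
    (f : E → EReal) (x : E) (k : ℕ) (xs : FormTuple E k) (u : E) : EReal :=
  Filter.liminf
    (fun p : ℝ × E =>
      (((Nat.factorial (k + 1) : ℝ) / p.1 ^ (k + 1) : ℝ) : EReal) *
        (f (x + p.1 • p.2) - f x -
          ((∑ i : Fin k, p.1 ^ (i.1 + 1) / (Nat.factorial (i.1 + 1)) * xs i (fun _ => p.2) : ℝ) :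
            EReal)))
    ((𝓝[>] (0 : ℝ)) ×ˢ 𝓝 u)

/-- The lower Hadamard subdifferential of order `k + 1` of `f` at `x`
with parameters `xs = (x₁*, …, x_k*)`. -/
def hadamardSubdiff {E : Type*} [NormedAddCommGroup E] [InnerProductSpace ℝ E]
    (f : E → EReal) (x : E) (k : ℕ) (xs : FormTuple E k) : Set (MForm E (k + 1)) :=
  {y | ∀ u : E, ((y (fun _ => u) : ℝ) : EReal) ≤ hadamardDeriv f x k xs u}

/-- `f` belongs to the class `𝓕_n (xbar)`: `xbar ∈ dom f` and for every unit vector `u`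
such that `0 ∈ ∂₋ⁱ f (xbar; 0, …, 0)` for `i = 1, …, n - 2` and
`d₋ⁱ f (xbar; 0, …, 0; u) = 0` for `i = 1, …, n - 1`, there are `ε, δ, α > 0` with
`f (xbar + t u') ≥ f xbar + α tⁿ` whenever `0 ≤ t < δ` and `‖u' - u‖ < ε`. -/
def MemClassF {E : Type*} [NormedAddCommGroup E] [InnerProductSpace ℝ E]
    (f : E → EReal) (n : ℕ) (xbar : E) : Prop :=
  f xbar ≠ ⊤ ∧ ∀ u : E, ‖u‖ = 1 →
    (∀ j : ℕ, j + 3 ≤ n → (0 : MForm E (j + 1)) ∈ hadamardSubdiff f xbar j (fun _ => 0)) →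
    (∀ j : ℕ, j + 2 ≤ n → hadamardDeriv f xbar j (fun _ => 0) u = 0) →
    ∃ ε > (0 : ℝ), ∃ δ > (0 : ℝ), ∃ α > (0 : ℝ), ∀ t : ℝ, ∀ u' : E,
      0 ≤ t → t < δ → ‖u' - u‖ < ε →
      f xbar + ((α * t ^ n : ℝ) : EReal) ≤ f (xbar + t • u')

/-- The function `g (x₁, x₂) = |x₁|ⁿ + |x₂|ⁿ` as an extended real valued function. -/
noncomputable def gEx18 (n : ℕ) : EuclideanSpace ℝ (Fin 2) → EReal := fun x =>
  ((|x 0| ^ n + |x 1| ^ n : ℝ) : EReal)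

lemma hadamardDeriv_zeros {E : Type*} [NormedAddCommGroup E] [InnerProductSpace ℝ E]
    (f : E → EReal) (x : E) (k : ℕ) (u : E) :
    hadamardDeriv f x k (fun _ => 0) u =
      Filter.liminf
        (fun p : ℝ × E =>
          (((Nat.factorial (k + 1) : ℝ) / p.1 ^ (k + 1) : ℝ) : EReal) *
            (f (x + p.1 • p.2) - f x))
        ((𝓝[>] (0 : ℝ)) ×ˢ 𝓝 u) := by
  simp [hadamardDeriv]


lemma containment {E : Type*} [NormedAddCommGroup E] [InnerProductSpace ℝ E]
    (n : ℕ) (hn : 3 ≤ n) (x : E) (f : E → EReal)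
    (hf : MemClassF f (n - 1) x) : MemClassF f n x := by
  obtain ⟨hdom, hmain⟩ := hf
  refine ⟨hdom, ?_⟩
  intro u hu hsub hder
  obtain ⟨ε, hε, δ, hδ, α, hα, hgr⟩ :=
    hmain u hu (fun j hj => hsub j (by omega)) (fun j hj => hder j (by omega))
  exfalso
  have hd0 : hadamardDeriv f x (n - 2) (fun _ => 0) u = 0 := hder (n - 2) (by omega)
  rw [hadamardDeriv_zeros] at hd0
  set k := n - 2 with hk
  have hk1 : k + 1 = n - 1 := by omega
  set L := (𝓝[>] (0 : ℝ)) ×ˢ 𝓝 u with hLdef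
  set G : ℝ × E → EReal := fun p =>
    (((Nat.factorial (k + 1) : ℝ) / p.1 ^ (k + 1) : ℝ) : EReal) *
      (f (x + p.1 • p.2) - f x) with hG
  have hev : ∀ᶠ p : ℝ × E in L, p.1 ∈ Set.Ioo 0 δ ∧ ‖p.2 - u‖ < ε := by
    have h1 : ∀ᶠ t : ℝ in 𝓝[>] (0:ℝ), t ∈ Set.Ioo 0 δ :=
      eventually_of_mem (Ioo_mem_nhdsGT_of_mem ⟨le_refl 0, hδ⟩) (fun t ht => ht)
    have h2 : ∀ᶠ v in 𝓝 u, ‖v - u‖ < ε :=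
      eventually_of_mem (Metric.ball_mem_nhds u hε) (fun v hv => by
        rw [← dist_eq_norm]; exact Metric.mem_ball.mp hv)
    exact Eventually.prod_mk h1 h2
  by_cases hb : f x = ⊥
  · have hvals : ∀ᶠ p in L, G p = ⊥ ∨ G p = ⊤ := by
      filter_upwards [hev] with p hp
      have hc : (0 : ℝ) < (Nat.factorial (k + 1) : ℝ) / p.1 ^ (k + 1) :=
        div_pos (by positivity) (pow_pos hp.1.1 _)
      simp only [hG, hb]
      by_cases hfb : f (x + p.1 • p.2) = ⊥
      · left
        rw [hfb]
        simp only [sub_eq_add_neg, EReal.neg_bot, EReal.bot_add]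
        exact EReal.coe_mul_bot_of_pos hc
      · right
        rw [sub_eq_add_neg, EReal.neg_bot, EReal.add_top_of_ne_bot hfb]
        exact EReal.coe_mul_top_of_pos hc
    by_cases htop : ∀ᶠ p in L, G p = ⊤
    · have h1 : (⊤ : EReal) ≤ liminf G L :=
        le_liminf_of_le (by isBoundedDefault) (htop.mono fun p hp => hp.ge)
      rw [hd0] at h1
      exact absurd h1 (by simp)
    · have hfreq : ∃ᶠ p in L, ¬ G p = ⊤ := Filter.not_eventually.mp htop
      have h2 : ∃ᶠ p in L, G p ≤ ⊥ := by
        refine (hfreq.and_eventually hvals).mono ?_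
        rintro p ⟨h1, h2 | h2⟩
        · exact h2.le
        · exact absurd h2 h1
      have := liminf_le_of_frequently_le h2
      rw [hd0] at this
      exact absurd this (by simp)
  · have hr : ((f x).toReal : EReal) = f x := EReal.coe_toReal hdom hb
    have hfinal : ((Nat.factorial (k + 1) * α : ℝ) : EReal) ≤ liminf G L := by
      refine le_liminf_of_le (by isBoundedDefault) ?_
      filter_upwards [hev] with p hp
      obtain ⟨⟨ht0, htδ⟩, hvu⟩ := hp
      have hgrow := hgr p.1 p.2 ht0.le htδ hvu
      have hc : (0 : ℝ) < (Nat.factorial (k + 1) : ℝ) / p.1 ^ (k + 1) :=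
        div_pos (by positivity) (pow_pos ht0 _)
      have h1 : ((α * p.1 ^ (k + 1) : ℝ) : EReal) ≤ f (x + p.1 • p.2) - f x := by
        rw [← hr]
        rw [EReal.le_sub_iff_add_le (Or.inl (EReal.coe_ne_bot _)) (Or.inl (EReal.coe_ne_top _))]
        calc ((α * p.1 ^ (k + 1) : ℝ) : EReal) + ((f x).toReal : EReal)
            = ((f x).toReal : EReal) + ((α * p.1 ^ (n - 1) : ℝ) : EReal) := by
              rw [hk1, add_comm]
          _ = f x + ((α * p.1 ^ (n - 1) : ℝ) : EReal) := by rw [hr]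
          _ ≤ f (x + p.1 • p.2) := hgrow
      calc ((Nat.factorial (k + 1) * α : ℝ) : EReal)
          = (((Nat.factorial (k + 1) : ℝ) / p.1 ^ (k + 1) : ℝ) : EReal) *
              ((α * p.1 ^ (k + 1) : ℝ) : EReal) := by
            rw [← EReal.coe_mul]
            congr 1
            field_simp
        _ ≤ G p := by
            exact mul_le_mul_of_nonneg_left h1 (by exact_mod_cast hc.le)
    rw [hd0] at hfinal
    have : (0 : ℝ) < Nat.factorial (k + 1) * α := by positivity
    have h0 : ((Nat.factorial (k + 1) * α : ℝ) : EReal) ≤ ((0 : ℝ) : EReal) := by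
      simpa using hfinal
    rw [EReal.coe_le_coe_iff] at h0
    linarith

lemma gEx18_zero (n : ℕ) (hn : n ≠ 0) : gEx18 n 0 = 0 := by
  simp [gEx18, zero_pow hn]

lemma gEx18_deriv (n k : ℕ) (hk : k + 1 < n) (u : EuclideanSpace ℝ (Fin 2)) :
    hadamardDeriv (gEx18 n) 0 k (fun _ => 0) u = 0 := by
  rw [hadamardDeriv_zeros]
  set L := (𝓝[>] (0 : ℝ)) ×ˢ 𝓝 u with hL
  set m := n - (k + 1) with hm
  have hm1 : m ≠ 0 := by omega
  set h : ℝ × EuclideanSpace ℝ (Fin 2) → ℝ :=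
    fun p => (Nat.factorial (k+1) : ℝ) * p.1 ^ m * (|p.2 0| ^ n + |p.2 1| ^ n) with hh
  have hcongr : ∀ᶠ p in L, (((Nat.factorial (k + 1) : ℝ) / p.1 ^ (k + 1) : ℝ) : EReal) *
      (gEx18 n (0 + p.1 • p.2) - gEx18 n 0) = ((h p : ℝ) : EReal) := by
    have : ∀ᶠ p in L, (0:ℝ) < p.1 :=
      Eventually.prod_inl (eventually_mem_nhdsWithin.mono fun t ht => ht) _
    filter_upwards [this] with p hp
    have h1 : gEx18 n (0 + p.1 • p.2) = ((|p.1 * p.2 0| ^ n + |p.1 * p.2 1| ^ n : ℝ) : EReal) := by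
      simp [gEx18]
    rw [h1, gEx18_zero n (by omega), sub_zero, ← EReal.coe_mul]
    congr 1
    have hpow : p.1 ^ n = p.1 ^ (k+1) * p.1 ^ m := by
      rw [← pow_add]; congr 1; omega
    have : ∀ a : ℝ, |p.1 * a| ^ n = p.1 ^ n * |a| ^ n := by
      intro a
      rw [abs_mul, abs_of_pos hp, mul_pow]
    rw [this, this, hh]
    simp only []
    field_simp
    rw [hpow]; ring
  rw [liminf_congr hcongr]
  have hth : Tendsto h L (𝓝 0) := by
    have h1 : Tendsto (fun p : ℝ × EuclideanSpace ℝ (Fin 2) => p.1) L (𝓝 0) :=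
      tendsto_fst.mono_right nhdsWithin_le_nhds
    have h2 : Tendsto (fun p : ℝ × EuclideanSpace ℝ (Fin 2) => p.2) L (𝓝 u) := tendsto_snd
    have hc0 : Continuous (fun x : EuclideanSpace ℝ (Fin 2) => x 0) :=
      (EuclideanSpace.proj (0 : Fin 2) : _ →L[ℝ] ℝ).continuous
    have hc1 : Continuous (fun x : EuclideanSpace ℝ (Fin 2) => x 1) :=
      (EuclideanSpace.proj (1 : Fin 2) : _ →L[ℝ] ℝ).continuous
    have h12 : Tendsto (fun p : ℝ × EuclideanSpace ℝ (Fin 2) => (p.1, p.2)) L (𝓝 ((0:ℝ), u)) := by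
      rw [nhds_prod_eq]; exact h1.prodMk h2
    have hcont : Continuous h := by
      exact (continuous_const.mul (continuous_fst.pow m)).mul
        (((hc0.comp continuous_snd).abs.pow n).add ((hc1.comp continuous_snd).abs.pow n))
    have := (hcont.tendsto ((0:ℝ), u)).comp h12
    simp only [Function.comp_def] at this
    convert this using 2
    simp [hh, zero_pow hm1]
  have : Tendsto (fun p => ((h p : ℝ) : EReal)) L (𝓝 ((0:ℝ) : EReal)) :=
    (continuous_coe_real_ereal.tendsto _).comp hth
  rw [Tendsto.liminf_eq (by simpa using this)]

lemma norm_sq2 (x : EuclideanSpace ℝ (Fin 2)) : ‖x‖ ^ 2 = (x 0) ^ 2 + (x 1) ^ 2 := by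
  rw [EuclideanSpace.norm_eq, Real.sq_sqrt (by positivity)]
  simp [Fin.sum_univ_two, Real.norm_eq_abs, sq_abs]

lemma g_lower (n : ℕ) (u u' : EuclideanSpace ℝ (Fin 2)) (hu : ‖u‖ = 1) (t : ℝ)
    (ht : 0 ≤ t) (hd : ‖u' - u‖ < 1/2) :
    (1/4 : ℝ) ^ n * t ^ n ≤ |t * u' 0| ^ n + |t * u' 1| ^ n := by
  have hnorm : (1/2 : ℝ) ≤ ‖u'‖ := by
    have h1 : ‖u‖ - ‖u'‖ ≤ ‖u - u'‖ := norm_sub_norm_le u u'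
    rw [norm_sub_rev] at h1
    linarith [hu ▸ h1]
  have hsq : (1/4 : ℝ) ≤ (u' 0) ^ 2 + (u' 1) ^ 2 := by
    have := norm_sq2 u'
    nlinarith [norm_nonneg u']
  have hmax : (1/4 : ℝ) ≤ |u' 0| ∨ (1/4 : ℝ) ≤ |u' 1| := by
    by_contra hcon
    push_neg at hcon
    nlinarith [sq_abs (u' 0), sq_abs (u' 1), abs_nonneg (u' 0), abs_nonneg (u' 1)]
  have habs : ∀ a : ℝ, |t * a| ^ n = t ^ n * |a| ^ n := by
    intro a; rw [abs_mul, abs_of_nonneg ht, mul_pow]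
  rw [habs, habs]
  rcases hmax with h | h
  · have h1 : (1/4 : ℝ) ^ n ≤ |u' 0| ^ n := pow_le_pow_left₀ (by norm_num) h n
    nlinarith [pow_nonneg ht n, pow_nonneg (abs_nonneg (u' 1)) n,
      mul_le_mul_of_nonneg_left h1 (pow_nonneg ht n)]
  · have h1 : (1/4 : ℝ) ^ n ≤ |u' 1| ^ n := pow_le_pow_left₀ (by norm_num) h n
    nlinarith [pow_nonneg ht n, pow_nonneg (abs_nonneg (u' 0)) n,
      mul_le_mul_of_nonneg_left h1 (pow_nonneg ht n)]

lemma part2 (n : ℕ) (hn : 3 ≤ n) : MemClassF (gEx18 n) n 0 := by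
  constructor
  · rw [gEx18_zero n (by omega)]
    simp
  intro u hu _ _
  refine ⟨1/2, by norm_num, 1, by norm_num, (1/4) ^ n, by positivity, ?_⟩
  intro t u' ht htδ hd
  rw [gEx18_zero n (by omega), zero_add]
  have hval : gEx18 n (0 + t • u') = ((|t * u' 0| ^ n + |t * u' 1| ^ n : ℝ) : EReal) := by
    simp [gEx18]
  rw [hval, EReal.coe_le_coe_iff]
  exact g_lower n u u' hu t ht hd

lemma part3 (n : ℕ) (hn : 3 ≤ n) : ¬ MemClassF (gEx18 n) (n - 1) 0 := by
  rintro ⟨-, h⟩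
  set u : EuclideanSpace ℝ (Fin 2) := EuclideanSpace.single 0 1 with hudef
  have hu : ‖u‖ = 1 := by simp [hudef]
  obtain ⟨ε, hε, δ, hδ, α, hα, hgr⟩ := h u hu
    (fun j hj v => by rw [gEx18_deriv n j (by omega) v]; simp)
    (fun j hj => gEx18_deriv n j (by omega) u)
  set t := min δ α / 2 with htdef
  have ht0 : 0 < t := by positivity
  have htδ : t < δ := by
    have := min_le_left δ α; simp only [htdef]; linarith
  have htα : t < α := by
    have := min_le_right δ α; simp only [htdef]; linarith
  have := hgr t u ht0.le htδ (by simp [hε])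
  rw [gEx18_zero n (by omega), zero_add] at this
  have hval : gEx18 n (0 + t • u) = ((t ^ n : ℝ) : EReal) := by
    have h0 : (t • u) 0 = t := by simp [hudef]
    have h1 : (t • u) 1 = (0 : ℝ) := by simp [hudef]
    rw [zero_add]
    simp [gEx18, h0, h1, abs_of_pos ht0, zero_pow (by omega : n ≠ 0)]
  rw [hval, EReal.coe_le_coe_iff] at this
  -- α * t ^ (n-1) ≤ t ^ n
  have hpow : t ^ n = t * t ^ (n - 1) := by
    conv_lhs => rw [show n = (n - 1) + 1 by omega]
    ring
  rw [hpow] at this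
  have htp : (0 : ℝ) < t ^ (n - 1) := pow_pos ht0 _
  nlinarith

/-- for every `n ≥ 3` and every point `x`, the class `𝓕_(n-1) (x)` is
contained in `𝓕_n (x)`, and the inclusion is strict: `gEx18 n` belongs to `𝓕_n (0)` but
not to `𝓕_(n-1) (0)`. -/
theorem stmt_18 (n : ℕ) (hn : 3 ≤ n) :
    (∀ (F : Type) [NormedAddCommGroup F] [InnerProductSpace ℝ F],
        ∀ (x : F) (f : F → EReal), MemClassF f (n - 1) x → MemClassF f n x) ∧
      MemClassF (gEx18 n) n 0 ∧ ¬ MemClassF (gEx18 n) (n - 1) 0 := by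
  exact ⟨fun F _ _ x f hf => containment n hn x f hf, part2 n hn, part3 n hn⟩
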